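/- (The adaptive threshold rule satisfies the average-Lfdr constraint.) Let m ≥ 1, α ∈ [0, 1], and let L_1, …, L_m ∈ [0, 1] be pairwise distinct, with order statistics L_(1) < L_(2) < … < L_(m). Define τ* = max{ t ∈ {1, …, m} : (1/t) Σ_{i=1}^t L_(i) ≤ α } with the convention max ∅ = 0, and define δ_i = 1{ L_i ≤ L_(τ*) } for τ* ≥ 1 and δ_i = 0 for all i if τ* = 0. Then Σ_{i=1}^m δ_i = τ* and Σ_{i=1}^m L_i δ_i ≤ α · max( Σ_{i=1}^m δ_i, 1 ). -/
import Mathlib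


/-- The `i`-th smallest value (indexed from `0`) among `L_1, …, L_m`, given a sorting
permutation `σ` (so that `i ↦ L (σ i)` is strictly monotone); junk value `0` for `i ≥ m`. -/
def ordStat (m : ℕ) (L : Fin m → ℝ) (σ : Equiv.Perm (Fin m)) (i : ℕ) : ℝ :=
  if h : i < m then L (σ ⟨i, h⟩) else 0

/-- The adaptive threshold `τ* = max{t ∈ {1, …, m} : (1/t) Σ_{i=1}^t L_(i) ≤ α}`, with the
convention `max ∅ = 0`. -/
noncomputable def tauStar (m : ℕ) (α : ℝ) (L : Fin m → ℝ) (σ : Equiv.Perm (Fin m)) : ℕ :=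
  open Classical in
  Nat.findGreatest
    (fun t => 1 ≤ t ∧ (∑ i ∈ Finset.range t, ordStat m L σ i) / t ≤ α) m

/-- The decision rule: reject `i` iff `L_i ≤ L_(τ*)` when `τ* ≥ 1`, reject nothing when
`τ* = 0`. -/
noncomputable def adaptDecision (m : ℕ) (α : ℝ) (L : Fin m → ℝ) (σ : Equiv.Perm (Fin m))
    (i : Fin m) : ℝ :=
  if tauStar m α L σ = 0 then 0
  else if L i ≤ ordStat m L σ (tauStar m α L σ - 1) then 1 else 0

/-- **The adaptive threshold rule satisfies the average-Lfdr constraint.**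
For pairwise distinct `L_1, …, L_m ∈ [0,1]` with sorting permutation `σ`, the adaptive
threshold rule rejects exactly `τ*` hypotheses and satisfies
`Σ_i L_i δ_i ≤ α · max(Σ_i δ_i, 1)`. -/
theorem stmt14 (m : ℕ) (hm : 1 ≤ m) (α : ℝ) (hα : α ∈ Set.Icc (0 : ℝ) 1)
    (L : Fin m → ℝ) (hL01 : ∀ i, L i ∈ Set.Icc (0 : ℝ) 1)
    (hL_inj : Function.Injective L)
    (σ : Equiv.Perm (Fin m)) (hσ : StrictMono (fun i => L (σ i))) :
    (∑ i, adaptDecision m α L σ i) = (tauStar m α L σ : ℝ) ∧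
    ∑ i, L i * adaptDecision m α L σ i ≤
      α * max (∑ i, adaptDecision m α L σ i) 1 := by
  classical
  set τ := tauStar m α L σ with hτdef
  have hτm : τ ≤ m := Nat.findGreatest_le m
  by_cases h0 : τ = 0
  · have hz : ∀ i, adaptDecision m α L σ i = 0 := by
      intro i; simp [adaptDecision, ← hτdef, h0]
    simp only [hz, Finset.sum_const_zero, mul_zero, h0, Nat.cast_zero]
    exact ⟨by simp, by simpa using hα.1⟩
  · have hτpos : 0 < τ := Nat.pos_of_ne_zero h0
    have hP : 1 ≤ τ ∧ (∑ i ∈ Finset.range τ, ordStat m L σ i) / τ ≤ α :=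
      Nat.findGreatest_of_ne_zero hτdef.symm h0
    have htlt : τ - 1 < m := by omega
    set t : Fin m := ⟨τ - 1, htlt⟩ with ht
    have hord : ordStat m L σ (τ - 1) = L (σ t) := by
      simp [ordStat, htlt, ht]
    have hdec : ∀ i, adaptDecision m α L σ i = if L i ≤ L (σ t) then 1 else 0 := by
      intro i
      simp only [adaptDecision, ← hτdef, h0, if_false, hord]
    have hcond : ∀ j : Fin m, (L (σ j) ≤ L (σ t)) ↔ (j : ℕ) < τ := by
      intro j
      rw [hσ.le_iff_le, Fin.le_def]
      show (j : ℕ) ≤ τ - 1 ↔ (j : ℕ) < τ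
      omega
    -- first sum
    have hsum1 : (∑ i, adaptDecision m α L σ i) = (τ : ℝ) := by
      calc (∑ i, adaptDecision m α L σ i)
          = ∑ j, adaptDecision m α L σ (σ j) := (Equiv.sum_comp σ _).symm
        _ = ∑ j : Fin m, (if (j : ℕ) < τ then (1:ℝ) else 0) := by
            refine Finset.sum_congr rfl fun j _ => ?_
            rw [hdec, if_congr (hcond j) rfl rfl]
        _ = ∑ k ∈ Finset.range m, (if k < τ then (1:ℝ) else 0) :=
            Fin.sum_univ_eq_sum_range (fun k => if k < τ then (1:ℝ) else 0) m
        _ = ∑ k ∈ Finset.range τ, (1:ℝ) := by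
            rw [← Finset.sum_filter]
            congr 1
            ext k
            simp only [Finset.mem_filter, Finset.mem_range]
            omega
        _ = (τ : ℝ) := by simp
    have hsum2 : (∑ i, L i * adaptDecision m α L σ i)
        = ∑ k ∈ Finset.range τ, ordStat m L σ k := by
      calc (∑ i, L i * adaptDecision m α L σ i)
          = ∑ j, L (σ j) * adaptDecision m α L σ (σ j) := (Equiv.sum_comp σ _).symm
        _ = ∑ j : Fin m, (if (j : ℕ) < τ then ordStat m L σ (j : ℕ) else 0) := by
            refine Finset.sum_congr rfl fun j _ => ?_
            rw [hdec, if_congr (hcond j) rfl rfl, mul_ite, mul_one, mul_zero]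
            congr 1
            simp [ordStat, j.isLt]
        _ = ∑ k ∈ Finset.range m, (if k < τ then ordStat m L σ k else 0) :=
            Fin.sum_univ_eq_sum_range (fun k => if k < τ then ordStat m L σ k else 0) m
        _ = ∑ k ∈ Finset.range τ, ordStat m L σ k := by
            rw [← Finset.sum_filter]
            congr 1
            ext k
            simp only [Finset.mem_filter, Finset.mem_range]
            omega
    refine ⟨hsum1, ?_⟩
    rw [hsum1, hsum2]
    have hτR : (1:ℝ) ≤ (τ:ℝ) := by exact_mod_cast hτpos
    rw [max_eq_left hτR]
    have := hP.2
    rw [div_le_iff₀ (by positivity : (0:ℝ) < (τ:ℝ))] at this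
    linarith
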